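/- Let Z be a real k × m matrix, let H be a real m × m symmetric positive semidefinite matrix, and let H^{1/2} denote the (unique) symmetric positive semidefinite square root of H. Let J₁ be a k-element subset of the column indices {1, …, m}. Then ( det( (Z H^{1/2})_{[k], J₁} ) )² ≤ det(Z Zᵀ) · det(H_{J₁}). (Paper's Theorem 3.) -/

import Mathlib

open Matrix

/-- The square root of a positive semidefinite matrix, as `Matrix.PosSemidef.sqrt` was defined
in Mathlib (December 2024); the definition has since been removed from Mathlib. -/
noncomputable def Matrix.PosSemidef.sqrt {n 𝕜 : Type*} [Fintype n] [DecidableEq n] [RCLike 𝕜]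
    [PartialOrder 𝕜] {A : Matrix n n 𝕜} (hA : A.PosSemidef) : Matrix n n 𝕜 :=
  hA.1.eigenvectorUnitary.1 * diagonal ((↑) ∘ (Real.sqrt ·) ∘ hA.1.eigenvalues) *
    (star hA.1.eigenvectorUnitary : Matrix n n 𝕜)

variable {n : Type*} [Fintype n] [DecidableEq n]

lemma Matrix.PosSemidef.sqrt_mul_self {A : Matrix n n ℝ} (hA : A.PosSemidef) :
    hA.sqrt * hA.sqrt = A := by
  have key : ∀ a b c d : Matrix n n ℝ, c * a = 1 → a * b * c * (a * d * c) = a * (b * d) * c := by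
    intro a b c d h
    simp only [Matrix.mul_assoc]
    rw [← Matrix.mul_assoc c a, h, Matrix.one_mul]
  unfold Matrix.PosSemidef.sqrt
  conv_rhs => rw [hA.1.spectral_theorem, Unitary.conjStarAlgAut_apply]
  rw [key _ _ _ _ (Unitary.coe_star_mul_self _), diagonal_mul_diagonal]
  congr 3
  funext i
  simp [Real.mul_self_sqrt (hA.eigenvalues_nonneg i)]

lemma Matrix.PosSemidef.posSemidef_sqrt {A : Matrix n n ℝ} (hA : A.PosSemidef) :
    hA.sqrt.PosSemidef := by
  unfold Matrix.PosSemidef.sqrt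
  exact (posSemidef_diagonal_iff.mpr fun i => by simp [Real.sqrt_nonneg]).mul_mul_conjTranspose_same _

/-- PSD real matrices have nonnegative determinant. -/
lemma psd_det_nonneg {M : Matrix n n ℝ} (hM : M.PosSemidef) : 0 ≤ M.det := by
  rw [hM.1.det_eq_prod_eigenvalues]
  exact Finset.prod_nonneg fun i _ => by simpa using hM.eigenvalues_nonneg i

/-- `Aᵀ * A` is PSD over ℝ. -/
lemma psd_transpose_mul_self {a b : Type*} [Fintype a] [Fintype b]
    (A : Matrix a b ℝ) : (Aᵀ * A).PosSemidef := by
  simpa [conjTranspose_eq_transpose_of_trivial] using posSemidef_conjTranspose_mul_self A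

lemma eigenvalues_le_one {M : Matrix n n ℝ} (hM : M.PosSemidef)
    (h1 : (1 - M).PosSemidef) (i : n) : hM.1.eigenvalues i ≤ 1 := by
  set v : n → ℝ := ⇑(hM.1.eigenvectorBasis i) with hv
  have hv0 : v ≠ 0 := by
    intro h
    exact hM.1.eigenvectorBasis.orthonormal.ne_zero i (by ext j; exact congrFun h j)
  have hc : 0 < v ⬝ᵥ v :=
    lt_of_le_of_ne (Finset.sum_nonneg fun j _ => mul_self_nonneg _)
      (fun h => hv0 (dotProduct_self_eq_zero.mp h.symm))
  have h2 := h1.dotProduct_mulVec_nonneg v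
  have hmv : M *ᵥ v = hM.1.eigenvalues i • v := hM.1.mulVec_eigenvectorBasis i
  rw [sub_mulVec, one_mulVec, hmv] at h2
  simp only [star_trivial, dotProduct_sub, dotProduct_smul, smul_eq_mul] at h2
  nlinarith [h2, hc]

lemma psd_det_le_one {M : Matrix n n ℝ} (hM : M.PosSemidef)
    (h1 : (1 - M).PosSemidef) : M.det ≤ 1 := by
  rw [hM.1.det_eq_prod_eigenvalues]
  refine Finset.prod_le_one (fun i _ => by simpa using hM.eigenvalues_nonneg i)
    (fun i _ => by simpa using eigenvalues_le_one hM h1 i)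

/-- Determinant monotonicity: `det X ≤ det (X + Y)` for PSD `X`, `Y`. -/
lemma det_le_det_add {X Y : Matrix n n ℝ} (hX : X.PosSemidef) (hY : Y.PosSemidef) :
    X.det ≤ (X + Y).det := by
  by_cases hd : (X + Y).det = 0
  · rw [hd]
    obtain ⟨v, hv0, hv⟩ := Matrix.exists_mulVec_eq_zero_iff.mpr hd
    have h0 : star v ⬝ᵥ X *ᵥ v + star v ⬝ᵥ Y *ᵥ v = 0 := by
      have : star v ⬝ᵥ (X + Y) *ᵥ v = 0 := by rw [hv, dotProduct_zero]
      rwa [add_mulVec, dotProduct_add] at this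
    have hx0 : star v ⬝ᵥ X *ᵥ v = 0 :=
      le_antisymm (by linarith [hY.dotProduct_mulVec_nonneg v]) (hX.dotProduct_mulVec_nonneg v)
    have : X *ᵥ v = 0 := (hX.dotProduct_mulVec_zero_iff v).mp hx0
    rw [Matrix.exists_mulVec_eq_zero_iff.mp ⟨v, hv0, this⟩]
  · set S := X + Y with hS
    have hSp : S.PosSemidef := hX.add hY
    set W := hSp.sqrt with hW
    have hWW : W * W = S := hSp.sqrt_mul_self
    have hWpsd : W.PosSemidef := hSp.posSemidef_sqrt
    have hWd : W.det ≠ 0 := by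
      intro h
      apply hd
      rw [← hWW, det_mul, h, mul_zero]
    have hWu : IsUnit W.det := isUnit_iff_ne_zero.mpr hWd
    have hWinv_symm : (W⁻¹)ᴴ = W⁻¹ := by
      rw [conjTranspose_nonsing_inv, hWpsd.1]
    set N := W⁻¹ * X * W⁻¹ with hN
    have hNpsd : N.PosSemidef := by
      have := hX.conjTranspose_mul_mul_same W⁻¹
      rwa [hWinv_symm] at this
    have hWiS : W⁻¹ * S * W⁻¹ = 1 := by
      rw [← hWW, ← mul_assoc, nonsing_inv_mul _ hWu, one_mul, mul_nonsing_inv _ hWu]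
    have h1N : (1 : Matrix n n ℝ) - N = W⁻¹ * Y * W⁻¹ := by
      rw [← hWiS, hN, hS]
      rw [mul_add, add_mul]
      abel
    have h1Npsd : ((1 : Matrix n n ℝ) - N).PosSemidef := by
      rw [h1N]
      have := hY.conjTranspose_mul_mul_same W⁻¹
      rwa [hWinv_symm] at this
    have hXdet : X.det = N.det * S.det := by
      have hX' : X = W * N * W := by
        rw [hN, ← mul_assoc, ← mul_assoc, mul_nonsing_inv _ hWu, one_mul,
          mul_assoc, nonsing_inv_mul _ hWu, mul_one]
      conv_lhs => rw [hX']
      rw [← hWW]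
      simp only [det_mul]
      ring
    rw [hXdet]
    have hSd : 0 ≤ S.det := psd_det_nonneg hSp
    nlinarith [psd_det_le_one hNpsd h1Npsd, psd_det_nonneg hNpsd]

/-- Cauchy–Schwarz for determinants: `det(AB)² ≤ det(AAᵀ) det(BᵀB)`. -/
lemma det_mul_sq_le {k : ℕ} {μ : Type*} [Fintype μ] [DecidableEq μ]
    (A : Matrix (Fin k) μ ℝ) (B : Matrix μ (Fin k) ℝ) :
    (A * B).det ^ 2 ≤ (A * Aᵀ).det * (Bᵀ * B).det := by
  have hGpsd : (Bᵀ * B).PosSemidef := psd_transpose_mul_self B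
  by_cases hGd : (Bᵀ * B).det = 0
  · obtain ⟨v, hv0, hv⟩ := Matrix.exists_mulVec_eq_zero_iff.mpr hGd
    have hBv : B *ᵥ v = 0 := by
      have h0 : (B *ᵥ v) ⬝ᵥ (B *ᵥ v) = 0 := by
        have h1 : v ⬝ᵥ ((Bᵀ * B) *ᵥ v) = 0 := by rw [hv, dotProduct_zero]
        rwa [← mulVec_mulVec, dotProduct_mulVec, vecMul_transpose] at h1
      exact dotProduct_self_eq_zero.mp h0
    have hABd : (A * B).det = 0 := by
      apply Matrix.exists_mulVec_eq_zero_iff.mp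
      exact ⟨v, hv0, by rw [← mulVec_mulVec, hBv, mulVec_zero]⟩
    rw [hABd, hGd]
    simp
  · have hGu : IsUnit (Bᵀ * B).det := isUnit_iff_ne_zero.mpr hGd
    have hGsym : (Bᵀ * B)ᵀ = Bᵀ * B := by
      rw [transpose_mul, transpose_transpose]
    have hPsym : (B * (Bᵀ * B)⁻¹ * Bᵀ)ᵀ = B * (Bᵀ * B)⁻¹ * Bᵀ := by
      simp only [transpose_mul, transpose_transpose, transpose_nonsing_inv,
        Matrix.mul_assoc]
    have hP2 : (B * (Bᵀ * B)⁻¹ * Bᵀ) * (B * (Bᵀ * B)⁻¹ * Bᵀ)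
        = B * (Bᵀ * B)⁻¹ * Bᵀ := by
      calc (B * (Bᵀ * B)⁻¹ * Bᵀ) * (B * (Bᵀ * B)⁻¹ * Bᵀ)
          = B * (Bᵀ * B)⁻¹ * (Bᵀ * B) * ((Bᵀ * B)⁻¹ * Bᵀ) := by
            simp only [Matrix.mul_assoc]
        _ = B * ((Bᵀ * B)⁻¹ * (Bᵀ * B)) * ((Bᵀ * B)⁻¹ * Bᵀ) := by
            rw [Matrix.mul_assoc B]
        _ = B * ((Bᵀ * B)⁻¹ * Bᵀ) := by
            rw [nonsing_inv_mul _ hGu, Matrix.mul_one]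
        _ = B * (Bᵀ * B)⁻¹ * Bᵀ := by rw [Matrix.mul_assoc]
    have hQsym : ((1 : Matrix μ μ ℝ) - B * (Bᵀ * B)⁻¹ * Bᵀ)ᵀ
        = 1 - B * (Bᵀ * B)⁻¹ * Bᵀ := by
      rw [transpose_sub, transpose_one, hPsym]
    have hQ2 : ((1 : Matrix μ μ ℝ) - B * (Bᵀ * B)⁻¹ * Bᵀ)
        * (1 - B * (Bᵀ * B)⁻¹ * Bᵀ) = 1 - B * (Bᵀ * B)⁻¹ * Bᵀ := by
      rw [Matrix.sub_mul, Matrix.mul_sub, Matrix.mul_sub, hP2]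
      simp only [Matrix.one_mul, Matrix.mul_one]
      abel
    have hXpsd : (A * (B * (Bᵀ * B)⁻¹ * Bᵀ) * Aᵀ).PosSemidef := by
      have h : A * (B * (Bᵀ * B)⁻¹ * Bᵀ) * Aᵀ
          = ((B * (Bᵀ * B)⁻¹ * Bᵀ) * Aᵀ)ᵀ * ((B * (Bᵀ * B)⁻¹ * Bᵀ) * Aᵀ) := by
        rw [transpose_mul, transpose_transpose, hPsym]
        conv_rhs => rw [← Matrix.mul_assoc, Matrix.mul_assoc A, hP2]
      rw [h]
      exact psd_transpose_mul_self _
    have hYpsd : (A * ((1 : Matrix μ μ ℝ) - B * (Bᵀ * B)⁻¹ * Bᵀ) * Aᵀ).PosSemidef := by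
      have h : A * ((1 : Matrix μ μ ℝ) - B * (Bᵀ * B)⁻¹ * Bᵀ) * Aᵀ
          = (((1 : Matrix μ μ ℝ) - B * (Bᵀ * B)⁻¹ * Bᵀ) * Aᵀ)ᵀ
            * (((1 : Matrix μ μ ℝ) - B * (Bᵀ * B)⁻¹ * Bᵀ) * Aᵀ) := by
        rw [transpose_mul, transpose_transpose, hQsym]
        conv_rhs => rw [← Matrix.mul_assoc, Matrix.mul_assoc A, hQ2]
      rw [h]
      exact psd_transpose_mul_self _
    have hsum : A * (B * (Bᵀ * B)⁻¹ * Bᵀ) * Aᵀ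
        + A * ((1 : Matrix μ μ ℝ) - B * (Bᵀ * B)⁻¹ * Bᵀ) * Aᵀ = A * Aᵀ := by
      rw [Matrix.mul_sub, Matrix.mul_one, Matrix.sub_mul, add_sub_cancel]
    have hmono : (A * (B * (Bᵀ * B)⁻¹ * Bᵀ) * Aᵀ).det ≤ (A * Aᵀ).det := by
      have h := det_le_det_add hXpsd hYpsd
      rwa [hsum] at h
    have hkey : (A * B).det ^ 2
        = (A * (B * (Bᵀ * B)⁻¹ * Bᵀ) * Aᵀ).det * (Bᵀ * B).det := by
      have hfac : A * (B * (Bᵀ * B)⁻¹ * Bᵀ) * Aᵀ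
          = (A * B) * (Bᵀ * B)⁻¹ * ((A * B)ᵀ) := by
        rw [transpose_mul]
        simp only [Matrix.mul_assoc]
      rw [hfac, det_mul, det_mul, det_transpose]
      have h1 : (Bᵀ * B)⁻¹.det * (Bᵀ * B).det = 1 := by
        rw [← det_mul, nonsing_inv_mul _ hGu, det_one]
      nlinarith [h1]
    rw [hkey]
    exact mul_le_mul_of_nonneg_right hmono (psd_det_nonneg hGpsd)

/-- Paper's Theorem 3:
`(det((Z H^{1/2})_{[k],J₁}))² ≤ det(Z Zᵀ) det(H_{J₁})`, where `H^{1/2}` is the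
unique symmetric positive semidefinite square root of `H` and columns are taken
from `J₁` in increasing order. -/
theorem stmt_3 {k m : ℕ} (Z : Matrix (Fin k) (Fin m) ℝ)
    (H : Matrix (Fin m) (Fin m) ℝ) (hH : H.PosSemidef)
    (J₁ : Finset (Fin m)) (hJ : J₁.card = k) :
    ((Z * hH.sqrt).submatrix id
        (fun i : Fin k => ((J₁.orderIsoOfFin hJ i : Fin m)))).det ^ 2
      ≤ (Z * Zᵀ).det *
        (H.submatrix (fun i : Fin k => ((J₁.orderIsoOfFin hJ i : Fin m)))
          (fun i : Fin k => ((J₁.orderIsoOfFin hJ i : Fin m)))).det := by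
  have key := det_mul_sq_le Z
    (hH.sqrt.submatrix id (fun i : Fin k => ((J₁.orderIsoOfFin hJ i : Fin m))))
  have e1 : (Z * hH.sqrt).submatrix id
      (fun i : Fin k => ((J₁.orderIsoOfFin hJ i : Fin m)))
      = Z * hH.sqrt.submatrix id (fun i : Fin k => ((J₁.orderIsoOfFin hJ i : Fin m))) := by
    ext i j
    simp [Matrix.mul_apply, Matrix.submatrix_apply]
  have e2 : (hH.sqrt.submatrix id (fun i : Fin k => ((J₁.orderIsoOfFin hJ i : Fin m))))ᵀ
      * hH.sqrt.submatrix id (fun i : Fin k => ((J₁.orderIsoOfFin hJ i : Fin m)))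
      = H.submatrix (fun i : Fin k => ((J₁.orderIsoOfFin hJ i : Fin m)))
          (fun i : Fin k => ((J₁.orderIsoOfFin hJ i : Fin m))) := by
    ext i j
    rw [Matrix.mul_apply, Matrix.submatrix_apply]
    conv_rhs => rw [← hH.sqrt_mul_self]
    rw [Matrix.mul_apply]
    refine Finset.sum_congr rfl fun l _ => ?_
    simp only [Matrix.transpose_apply, Matrix.submatrix_apply, id]
    rw [← hH.posSemidef_sqrt.1.apply]
    simp
  rw [e1, ← e2]
  exact key
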